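/- arXiv:2111.05499 — 5 statements merged into one kernel-verified Lean document; each statement's English description precedes it below -/
import Mathlib

section
/- For every integer N ≥ 1, the rank of the matrix Σ_{i=1}^{N} σ_i (the sum of the N qubit PBT signal states) equals 2^{N+1} − N − 2. -/
open Finset

open Matrix

/-- The integer-scaled qubit PBT signal state `2^N σ_i`, a matrix on
`(ℂ²)^{⊗N} ⊗ ℂ²` indexed by pairs `(a, c)`. Its `((a,c),(a',c'))` entry is `1`
iff `a_i = c`, `a'_i = c'`, and `a_j = a'_j` for all `j ≠ i`, and `0` otherwise. -/
def sigmaQubit (N : ℕ) (i : Fin N) :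
    Matrix ((Fin N → Fin 2) × Fin 2) ((Fin N → Fin 2) × Fin 2) ℚ :=
  fun p q =>
    if p.1 i = p.2 ∧ q.1 i = q.2 ∧ ∀ j, j ≠ i → p.1 j = q.1 j then 1 else 0

set_option linter.unreachableTactic false
set_option linter.unusedTactic false

namespace PBTAux

def wt {N : ℕ} (a : Fin N → Fin 2) : ℕ := ∑ i, (a i : ℕ)

def P (N : ℕ) : Matrix ((Fin N → Fin 2) × Fin 2) (Fin N × (Fin N → Fin 2)) ℚ :=
  fun p q => if p.1 q.1 = p.2 ∧ q.2 q.1 = 0 ∧ ∀ j, j ≠ q.1 → p.1 j = q.2 j then 1 else 0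

lemma P_apply (N : ℕ) (p : (Fin N → Fin 2) × Fin 2) (i : Fin N) (b : Fin N → Fin 2) :
    P N p (i, b) = if p.1 i = p.2 ∧ b i = 0 ∧ ∀ j, j ≠ i → p.1 j = b j then 1 else 0 := rfl

lemma sum_sigma_eq (N : ℕ) : (∑ i, sigmaQubit N i) = P N * (P N)ᵀ := by
  ext p q
  rw [Matrix.sum_apply, Matrix.mul_apply, Fintype.sum_prod_type]
  refine Finset.sum_congr rfl fun i _ => ?_
  simp only [Matrix.transpose_apply, P_apply]
  by_cases h : p.1 i = p.2 ∧ q.1 i = q.2 ∧ ∀ j, j ≠ i → p.1 j = q.1 j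
  · rw [sigmaQubit, if_pos h]
    rw [Finset.sum_eq_single (Function.update p.1 i 0)]
    · rw [if_pos, if_pos, one_mul]
      · exact ⟨h.2.1, Function.update_self .., fun j hj => by
          rw [Function.update_of_ne hj, ← (h.2.2 j hj)]⟩
      · exact ⟨h.1, Function.update_self .., fun j hj => by
          rw [Function.update_of_ne hj]⟩
    · intro b _ hb
      rw [if_neg, zero_mul]
      rintro ⟨-, h2, h3⟩
      apply hb
      funext j
      by_cases hj : j = i
      · subst hj; rw [Function.update_self, h2]
      · rw [Function.update_of_ne hj, (h3 j hj).symm]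
    · intro hmem; exact absurd (Finset.mem_univ _) hmem
  · rw [sigmaQubit, if_neg h]
    refine (Finset.sum_eq_zero fun b _ => ?_).symm
    by_cases h1 : p.1 i = p.2 ∧ b i = 0 ∧ ∀ j, j ≠ i → p.1 j = b j
    · rw [if_pos h1, one_mul, if_neg]
      rintro ⟨g1, -, g3⟩
      exact h ⟨h1.1, g1, fun j hj => by rw [h1.2.2 j hj, g3 j hj]⟩
    · rw [if_neg h1, zero_mul]

end PBTAux

namespace PBTAux2
open PBTAux

variable {N : ℕ}

lemma wt_le (a : Fin N → Fin 2) : wt a ≤ N := by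
  calc wt a ≤ ∑ _i : Fin N, 1 := Finset.sum_le_sum (fun i _ => by omega)
  _ = N := by simp

lemma wt_update_one {a : Fin N → Fin 2} {i : Fin N} (h : a i = 0) :
    wt (Function.update a i 1) = wt a + 1 := by
  have hcong : ∑ j ∈ Finset.univ.erase i, ((Function.update a i 1 j : Fin 2) : ℕ)
      = ∑ j ∈ Finset.univ.erase i, ((a j : Fin 2) : ℕ) :=
    Finset.sum_congr rfl fun j hj => by
      rw [Function.update_of_ne (Finset.ne_of_mem_erase hj)]
  rw [wt, wt, ← Finset.sum_erase_add _ _ (Finset.mem_univ i),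
    ← Finset.sum_erase_add _ _ (Finset.mem_univ i), h, hcong, Function.update_self]
  simp

lemma wt_update_zero {a : Fin N → Fin 2} {i : Fin N} (h : a i = 1) :
    wt a = wt (Function.update a i 0) + 1 := by
  have h0 : Function.update a i 0 i = 0 := Function.update_self ..
  have : Function.update (Function.update a i 0) i 1 = a := by
    funext j
    by_cases hj : j = i
    · subst hj; rw [Function.update_self, h]
    · rw [Function.update_of_ne hj, Function.update_of_ne hj]
  conv_lhs => rw [← this]
  rw [wt_update_one h0]

def e (p : (Fin N → Fin 2) × Fin 2) : ((Fin N → Fin 2) × Fin 2) → ℚ := Pi.single p 1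

def W (N : ℕ) : Submodule ℚ (((Fin N → Fin 2) × Fin 2) → ℚ) :=
  Submodule.span ℚ (Set.range (P N)ᵀ)

lemma col_P {i : Fin N} {b : Fin N → Fin 2} (hb : b i = 0) :
    (P N)ᵀ (i, b) = e (b, 0) + e (Function.update b i 1, 1) := by
  funext p
  rcases p with ⟨a, c⟩
  rw [Matrix.transpose_apply, P_apply]
  simp only [e, Pi.add_apply, Pi.single_apply]
  by_cases h : a i = c ∧ b i = 0 ∧ ∀ j, j ≠ i → a j = b j
  · rw [if_pos h]
    have hc : c = 0 ∨ c = 1 := by omega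
    rcases hc with hc | hc
    · have hab : a = b := by
        funext j
        by_cases hj : j = i
        · subst hj; rw [hb, ← hc, h.1]
        · exact h.2.2 j hj
      subst hc; subst hab
      rw [if_pos rfl, if_neg (by simp), add_zero]
    · have hab : a = Function.update b i 1 := by
        funext j
        by_cases hj : j = i
        · subst hj; rw [Function.update_self, ← hc, h.1]
        · rw [Function.update_of_ne hj]; exact h.2.2 j hj
      subst hc
      have hne : (a, (1 : Fin 2)) ≠ (b, 0) := by
        simp only [ne_eq, Prod.mk.injEq, not_and]
        intro _; decide
      rw [if_neg hne, if_pos (by rw [hab]), zero_add]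
  · rw [if_neg h, if_neg, if_neg, add_zero]
    · intro hp
      rw [Prod.mk.injEq] at hp
      obtain ⟨rfl, rfl⟩ := hp
      exact h ⟨Function.update_self .., hb, fun j hj => Function.update_of_ne hj _ _⟩
    · intro hp
      rw [Prod.mk.injEq] at hp
      obtain ⟨rfl, rfl⟩ := hp
      exact h ⟨hb, hb, fun j hj => rfl⟩

lemma edge_mem {i : Fin N} {b : Fin N → Fin 2} (hb : b i = 0) :
    e (b, 0) + e (Function.update b i 1, 1) ∈ W N :=
  col_P hb ▸ Submodule.subset_span ⟨(i, b), rfl⟩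

end PBTAux2

namespace PBTAux2
open PBTAux

variable {N : ℕ}

lemma swap0_mem {a : Fin N → Fin 2} {i j : Fin N} (hij : i ≠ j) (hi : a i = 1) (hj : a j = 0) :
    e (a, 0) - e (Function.update (Function.update a i 0) j 1, 0) ∈ W N := by
  set a' := Function.update (Function.update a i 0) j 1 with ha'
  have ha'i : a' i = 0 := by
    rw [ha', Function.update_of_ne hij, Function.update_self]
  have key : Function.update a' i 1 = Function.update a j 1 := by
    funext k
    by_cases hk : k = i
    · subst hk
      rw [Function.update_self, Function.update_of_ne hij, hi]
    · rw [Function.update_of_ne hk, ha']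
      by_cases hkj : k = j
      · subst hkj; rw [Function.update_self, Function.update_self]
      · rw [Function.update_of_ne hkj, Function.update_of_ne hkj,
          Function.update_of_ne hk]
  have h1 : e (a, 0) + e (Function.update a j 1, 1) ∈ W N := edge_mem hj
  have h2 : e (a', 0) + e (Function.update a' i 1, 1) ∈ W N := edge_mem ha'i
  rw [key] at h2
  have h3 := sub_mem h1 h2
  rwa [add_sub_add_right_eq_sub] at h3

lemma swap1_mem {a : Fin N → Fin 2} {i j : Fin N} (hij : i ≠ j) (hi : a i = 1) (hj : a j = 0) :
    e (a, 1) - e (Function.update (Function.update a i 0) j 1, 1) ∈ W N := by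
  set v := Function.update a i 0 with hv
  have hvi : v i = 0 := Function.update_self ..
  have hvj : v j = 0 := by rw [hv, Function.update_of_ne (Ne.symm hij), hj]
  have k1 : Function.update v i 1 = a := by
    funext k
    by_cases hk : k = i
    · subst hk; rw [Function.update_self, hi]
    · rw [Function.update_of_ne hk, hv, Function.update_of_ne hk]
  have h1 : e (v, 0) + e (a, 1) ∈ W N := by
    have := edge_mem hvi
    rwa [k1] at this
  have h2 : e (v, 0) + e (Function.update v j 1, 1) ∈ W N := edge_mem hvj
  have h3 := sub_mem h1 h2
  rwa [add_sub_add_left_eq_sub] at h3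

lemma exists_swap {a b : Fin N → Fin 2} (hwt : wt a = wt b) (hab : a ≠ b) :
    ∃ i j, i ≠ j ∧ a i = 1 ∧ b i = 0 ∧ a j = 0 ∧ b j = 1 := by
  have dich : ∀ x y : Fin 2, ¬(x = 1 ∧ y = 0) → (x : ℕ) ≤ (y : ℕ) := by decide
  have dich' : ∀ x y : Fin 2, (x : ℕ) = (y : ℕ) → x = y := by decide
  have hex1 : ∃ i, a i = 1 ∧ b i = 0 := by
    by_contra hno
    push_neg at hno
    have hle : ∀ i ∈ Finset.univ, (a i : ℕ) ≤ (b i : ℕ) := by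
      intro i _
      refine dich _ _ ?_
      rintro ⟨h1, h2⟩
      exact absurd h2 (hno i h1)
    have := (Finset.sum_eq_sum_iff_of_le hle).mp hwt
    exact hab (funext fun i => dich' _ _ (this i (Finset.mem_univ i)))
  have hex2 : ∃ j, a j = 0 ∧ b j = 1 := by
    by_contra hno
    push_neg at hno
    have hle : ∀ i ∈ Finset.univ, (b i : ℕ) ≤ (a i : ℕ) := by
      intro i _
      refine dich _ _ ?_
      rintro ⟨h1, h2⟩
      exact absurd h1 (hno i h2)
    have := (Finset.sum_eq_sum_iff_of_le hle).mp hwt.symm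
    exact hab (funext fun i => dich' _ _ (this i (Finset.mem_univ i)).symm)
  obtain ⟨i, hi1, hi2⟩ := hex1
  obtain ⟨j, hj1, hj2⟩ := hex2
  refine ⟨i, j, ?_, hi1, hi2, hj1, hj2⟩
  intro hijeq
  rw [hijeq, hj1] at hi1
  exact absurd hi1 (by decide)

lemma diff_mem_aux : ∀ (n : ℕ) (a b : Fin N → Fin 2) (c : Fin 2),
    (Finset.univ.filter fun k => a k ≠ b k).card ≤ n → wt a = wt b →
    e (a, c) - e (b, c) ∈ W N := by
  intro n
  induction n with
  | zero =>
    intro a b c hcard hwt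
    have hab : a = b := by
      funext k
      by_contra hk
      have hmem : k ∈ Finset.univ.filter fun k => a k ≠ b k :=
        Finset.mem_filter.mpr ⟨Finset.mem_univ k, hk⟩
      have := Finset.card_pos.mpr ⟨k, hmem⟩
      omega
    rw [hab, sub_self]
    exact zero_mem _
  | succ n ih =>
    intro a b c hcard hwt
    by_cases hab : a = b
    · rw [hab, sub_self]; exact zero_mem _
    obtain ⟨i, j, hij, hi1, hbi0, haj0, hbj1⟩ := exists_swap hwt hab
    set a' := Function.update (Function.update a i 0) j 1 with ha'
    have haj' : Function.update a i 0 j = 0 := by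
      rw [Function.update_of_ne (Ne.symm hij), haj0]
    have hwa' : wt a' = wt a := by
      rw [ha', wt_update_one haj']
      have := wt_update_zero hi1
      omega
    have hstep : e (a, c) - e (a', c) ∈ W N := by
      have hc : c = 0 ∨ c = 1 := by omega
      rcases hc with hc | hc <;> subst hc
      · exact swap0_mem hij hi1 haj0
      · exact swap1_mem hij hi1 haj0
    have ha'i : a' i = 0 := by
      rw [ha', Function.update_of_ne hij, Function.update_self]
    have ha'j : a' j = 1 := by rw [ha', Function.update_self]
    have hsub : (Finset.univ.filter fun k => a' k ≠ b k) ⊆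
        (Finset.univ.filter fun k => a k ≠ b k).erase i := by
      intro k hk
      rw [Finset.mem_filter] at hk
      have hki : k ≠ i := by
        rintro rfl
        rw [ha'i, hbi0] at hk
        exact hk.2 rfl
      have hkj : k ≠ j := by
        rintro rfl
        rw [ha'j, hbj1] at hk
        exact hk.2 rfl
      refine Finset.mem_erase.mpr ⟨hki, Finset.mem_filter.mpr ⟨Finset.mem_univ k, ?_⟩⟩
      have : a' k = a k := by
        rw [ha', Function.update_of_ne hkj, Function.update_of_ne hki]
      rw [← this]
      exact hk.2
    have himem : i ∈ Finset.univ.filter fun k => a k ≠ b k := by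
      refine Finset.mem_filter.mpr ⟨Finset.mem_univ i, ?_⟩
      rw [hi1, hbi0]
      decide
    have hcard' : (Finset.univ.filter fun k => a' k ≠ b k).card ≤ n := by
      have h1 := Finset.card_le_card hsub
      rw [Finset.card_erase_of_mem himem] at h1
      have h2 := Finset.card_pos.mpr ⟨i, himem⟩
      omega
    have htail := ih a' b c hcard' (hwa'.trans hwt)
    have := add_mem hstep htail
    rwa [sub_add_sub_cancel] at this

lemma diff_mem {a b : Fin N → Fin 2} (c : Fin 2) (hwt : wt a = wt b) :
    e (a, c) - e (b, c) ∈ W N :=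
  diff_mem_aux _ a b c le_rfl hwt

end PBTAux2

namespace PBTAux2
open PBTAux

variable {N : ℕ}

def rep (N k : ℕ) : Fin N → Fin 2 := fun i => if (i : ℕ) < k then 1 else 0

lemma card_filter_lt {k : ℕ} (hk : k ≤ N) :
    (Finset.univ.filter fun i : Fin N => (i : ℕ) < k).card = k := by
  have h : (Finset.univ.filter fun i : Fin N => (i : ℕ) < k).card = (Finset.range k).card := by
    apply Finset.card_bij (fun (i : Fin N) _ => (i : ℕ))
    · intro a ha
      rw [Finset.mem_range]
      exact (Finset.mem_filter.mp ha).2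
    · intro a _ b _ h
      exact Fin.val_injective h
    · intro n hn
      exact ⟨⟨n, lt_of_lt_of_le (Finset.mem_range.mp hn) hk⟩,
        Finset.mem_filter.mpr ⟨Finset.mem_univ _, Finset.mem_range.mp hn⟩, rfl⟩
  rw [h, Finset.card_range]

lemma wt_rep {k : ℕ} (hk : k ≤ N) : wt (rep N k) = k := by
  have h1 : ∀ i : Fin N, ((rep N k i : Fin 2) : ℕ) = if (i : ℕ) < k then 1 else 0 := by
    intro i
    rw [rep]
    split_ifs <;> rfl
  rw [wt, Finset.sum_congr rfl fun i _ => h1 i, Finset.sum_boole]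
  rw [card_filter_lt hk]
  norm_num

lemma rep_at {k : ℕ} (hk : k < N) : rep N k ⟨k, hk⟩ = 0 := by
  rw [rep]
  simp

lemma update_rep {k : ℕ} (hk : k < N) :
    Function.update (rep N k) ⟨k, hk⟩ 1 = rep N (k + 1) := by
  funext i
  by_cases hi : i = ⟨k, hk⟩
  · subst hi
    rw [Function.update_self, rep]
    simp
  · rw [Function.update_of_ne hi, rep, rep]
    have hne : (i : ℕ) ≠ k := fun h => hi (Fin.ext h)
    by_cases h2 : (i : ℕ) < k
    · rw [if_pos h2, if_pos (by omega)]
    · rw [if_neg h2, if_neg (by omega)]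

def M (N : ℕ) : Matrix (Fin (N + 2)) ((Fin N → Fin 2) × Fin 2) ℚ :=
  fun k p => if p.2 = 0 ∧ wt p.1 + 1 = (k : ℕ) then 1
    else if p.2 = 1 ∧ wt p.1 = (k : ℕ) then -1 else 0

lemma span_le_ker : W N ≤ LinearMap.ker (M N).mulVecLin := by
  rw [W, Submodule.span_le]
  rintro _ ⟨⟨i, b⟩, rfl⟩
  rw [SetLike.mem_coe, LinearMap.mem_ker]
  by_cases hb : b i = 0
  · rw [col_P hb, map_add]
    have hwb := wt_update_one hb
    funext k
    simp only [Matrix.mulVecLin_apply, Pi.add_apply, Pi.zero_apply, e,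
      Matrix.mulVec_single, mul_one, MulOpposite.op_one, one_smul, Matrix.col_apply]
    rw [M, M]
    simp only [hwb]
    norm_num
    split_ifs <;> norm_num
  · have hz : (P N)ᵀ (i, b) = 0 := by
      funext p
      rw [Matrix.transpose_apply, P_apply,
        if_neg (by rintro ⟨-, h2, -⟩; exact hb h2)]
      rfl
    rw [hz, map_zero]

end PBTAux2

namespace PBTAux2
open PBTAux

variable {N : ℕ}

lemma M_entrySum (f : ((Fin N → Fin 2) × Fin 2) → ℚ) (k : Fin (N + 2)) :
    (M N).mulVec f k
      = (∑ a ∈ Finset.univ.filter fun a : Fin N → Fin 2 => wt a + 1 = (k : ℕ), f (a, 0))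
        - ∑ a ∈ Finset.univ.filter fun a : Fin N → Fin 2 => wt a = (k : ℕ), f (a, 1) := by
  have ha : ∀ a : Fin N → Fin 2, ∑ c : Fin 2, M N k (a, c) * f (a, c)
      = (if wt a + 1 = (k : ℕ) then f (a, 0) else 0)
        + (if wt a = (k : ℕ) then -f (a, 1) else 0) := by
    intro a
    rw [Fin.sum_univ_two, M, M]
    norm_num
  have h0 : (M N).mulVec f k = ∑ p, M N k p * f p := rfl
  rw [h0, Fintype.sum_prod_type, Finset.sum_congr rfl fun a _ => ha a,
    Finset.sum_add_distrib, ← Finset.sum_filter, ← Finset.sum_filter,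
    Finset.sum_neg_distrib, sub_eq_add_neg]

lemma ker_le_span : LinearMap.ker (M N).mulVecLin ≤ W N := by
  intro f hf
  rw [LinearMap.mem_ker, Matrix.mulVecLin_apply] at hf
  set s : ℕ → ℚ := fun k =>
    ∑ a ∈ Finset.univ.filter fun a : Fin N → Fin 2 => wt a = k, f (a, 0) with hs
  set t : ℕ → ℚ := fun k =>
    ∑ a ∈ Finset.univ.filter fun a : Fin N → Fin 2 => wt a = k, f (a, 1) with ht
  have hcon : ∀ k : Fin (N + 2),
      (∑ a ∈ Finset.univ.filter fun a : Fin N → Fin 2 => wt a + 1 = (k : ℕ), f (a, 0))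
        - t (k : ℕ) = 0 := by
    intro k
    rw [ht, ← M_entrySum f k, hf]
    rfl
  have hst : ∀ k : ℕ, k ≤ N → s k = t (k + 1) := by
    intro k hk
    have := hcon ⟨k + 1, by omega⟩
    have hfe : (Finset.univ.filter fun a : Fin N → Fin 2 => wt a + 1 = ((⟨k + 1, by omega⟩ : Fin (N + 2)) : ℕ))
        = Finset.univ.filter fun a : Fin N → Fin 2 => wt a = k := by
      refine Finset.filter_congr fun a _ => ?_
      simp only [Fin.val_mk]
      omega
    rw [hfe] at this
    rw [hs]
    have : s k - t (k + 1) = 0 := by rw [hs]; exact this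
    linarith [this]
  have ht0 : t 0 = 0 := by
    have := hcon ⟨0, by omega⟩
    have hfe : (Finset.univ.filter fun a : Fin N → Fin 2 => wt a + 1 = ((⟨0, by omega⟩ : Fin (N + 2)) : ℕ)) = ∅ := by
      refine Finset.filter_false_of_mem fun a _ => by simp
    rw [hfe, Finset.sum_empty] at this
    simpa using this
  have htN : t (N + 1) = 0 := by
    rw [ht]
    refine Finset.sum_eq_zero fun a ha => ?_
    have := (Finset.mem_filter.mp ha).2
    have := wt_le a
    omega
  have hsN : s N = 0 := by rw [hst N le_rfl, htN]
  -- decomposition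
  have hsingle : ∀ p : (Fin N → Fin 2) × Fin 2, f p • e p = Pi.single p (f p) := by
    intro p
    rw [e, ← Pi.single_smul, smul_eq_mul, mul_one]
  have hdecomp : f = (∑ p : (Fin N → Fin 2) × Fin 2, f p • (e p - e (rep N (wt p.1), p.2)))
      + ∑ p : (Fin N → Fin 2) × Fin 2, f p • e (rep N (wt p.1), p.2) := by
    rw [← Finset.sum_add_distrib]
    have : ∀ p : (Fin N → Fin 2) × Fin 2,
        f p • (e p - e (rep N (wt p.1), p.2)) + f p • e (rep N (wt p.1), p.2) = f p • e p := by
      intro p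
      rw [smul_sub, sub_add_cancel]
    rw [Finset.sum_congr rfl fun p _ => this p,
      Finset.sum_congr rfl fun p _ => hsingle p, Finset.univ_sum_single]
  have hfirst : (∑ p : (Fin N → Fin 2) × Fin 2, f p • (e p - e (rep N (wt p.1), p.2))) ∈ W N := by
    refine Submodule.sum_mem _ fun p _ => Submodule.smul_mem _ _ ?_
    exact diff_mem p.2 (wt_rep (wt_le p.1)).symm
  have hsecond : (∑ p : (Fin N → Fin 2) × Fin 2, f p • e (rep N (wt p.1), p.2)) ∈ W N := by
    have hsplit : (∑ p : (Fin N → Fin 2) × Fin 2, f p • e (rep N (wt p.1), p.2))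
        = (∑ k ∈ Finset.range (N + 1), s k • e (rep N k, 0))
          + ∑ k ∈ Finset.range (N + 1), t k • e (rep N k, 1) := by
      rw [Fintype.sum_prod_type]
      have h2 : ∀ a : Fin N → Fin 2, ∑ c : Fin 2, f (a, c) • e (rep N (wt a), c)
          = f (a, 0) • e (rep N (wt a), 0) + f (a, 1) • e (rep N (wt a), 1) :=
        fun a => Fin.sum_univ_two _
      rw [Finset.sum_congr rfl fun a _ => h2 a, Finset.sum_add_distrib]
      congr 1
      · rw [← Finset.sum_fiberwise_of_maps_to
          (fun a _ => Finset.mem_range.mpr (by have := wt_le a; omega) :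
            ∀ a ∈ Finset.univ, wt a ∈ Finset.range (N + 1))
          (fun a => f (a, 0) • e (rep N (wt a), 0))]
        refine Finset.sum_congr rfl fun k hk => ?_
        rw [hs, Finset.sum_smul]
        refine Finset.sum_congr rfl fun a ha => ?_
        rw [(Finset.mem_filter.mp ha).2]
      · rw [← Finset.sum_fiberwise_of_maps_to
          (fun a _ => Finset.mem_range.mpr (by have := wt_le a; omega) :
            ∀ a ∈ Finset.univ, wt a ∈ Finset.range (N + 1))
          (fun a => f (a, 1) • e (rep N (wt a), 1))]
        refine Finset.sum_congr rfl fun k hk => ?_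
        rw [ht, Finset.sum_smul]
        refine Finset.sum_congr rfl fun a ha => ?_
        rw [(Finset.mem_filter.mp ha).2]
    rw [hsplit, Finset.sum_range_succ, hsN, zero_smul, add_zero,
      Finset.sum_range_succ', ht0, zero_smul, add_zero, ← Finset.sum_add_distrib]
    refine Submodule.sum_mem _ fun k hk => ?_
    have hkN : k < N := Finset.mem_range.mp hk
    rw [← hst k (le_of_lt hkN), ← smul_add]
    refine Submodule.smul_mem _ _ ?_
    have := edge_mem (rep_at hkN)
    rwa [update_rep hkN] at this
  rw [hdecomp]
  exact add_mem hfirst hsecond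

end PBTAux2

namespace PBTAux2
open PBTAux

variable {N : ℕ}

def M' (N : ℕ) : Matrix ((Fin N → Fin 2) × Fin 2) (Fin (N + 2)) ℚ :=
  fun p k => if (k : ℕ) = 0 then (if p = (rep N 0, 1) then -1 else 0)
    else (if p = (rep N ((k : ℕ) - 1), 0) then 1 else 0)

lemma MM' : M N * M' N = 1 := by
  ext k k'
  rw [Matrix.mul_apply]
  by_cases h0 : (k' : ℕ) = 0
  · rw [Finset.sum_eq_single ((rep N 0, 1) : (Fin N → Fin 2) × Fin 2)]
    · rw [M', if_pos h0, if_pos rfl, M]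
      have hw : wt (rep N 0) = 0 := wt_rep (Nat.zero_le N)
      simp only [hw]
      norm_num
      rw [Matrix.one_apply]
      have : k = k' ↔ (0 : ℕ) = (k : ℕ) := by
        rw [Fin.ext_iff]
        omega
      split_ifs with h1 h2 h2 <;> first | rfl | (exfalso; omega) |
        (exfalso; exact h2 (this.mpr h1)) | (exfalso; exact absurd (this.mp h2) h1)
    · intro p _ hp
      rw [M', if_pos h0, if_neg hp, mul_zero]
    · intro h
      exact absurd (Finset.mem_univ _) h
  · rw [Finset.sum_eq_single ((rep N ((k' : ℕ) - 1), 0) : (Fin N → Fin 2) × Fin 2)]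
    · rw [M', if_neg h0, if_pos rfl, M]
      have hk' : (k' : ℕ) - 1 ≤ N := by
        have := k'.isLt
        omega
      have hw : wt (rep N ((k' : ℕ) - 1)) = (k' : ℕ) - 1 := wt_rep hk'
      simp only [hw]
      norm_num
      rw [Matrix.one_apply]
      have hiff : k = k' ↔ (k' : ℕ) - 1 + 1 = (k : ℕ) := by
        rw [Fin.ext_iff]
        omega
      split_ifs with h1 h2 h2 <;> first | rfl |
        (exfalso; exact h2 (hiff.mpr h1)) | (exfalso; exact absurd (hiff.mp h2) h1)
    · intro p _ hp
      rw [M', if_neg h0, if_neg hp, mul_zero]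
    · intro h
      exact absurd (Finset.mem_univ _) h

lemma M_surj : Function.Surjective (M N).mulVecLin := fun y =>
  ⟨(M' N).mulVec y, by
    rw [Matrix.mulVecLin_apply, Matrix.mulVec_mulVec, MM', Matrix.one_mulVec]⟩

end PBTAux2

/-- The rank of the sum of the `N` qubit PBT signal states equals
`2^(N+1) − N − 2`. -/
theorem rank_sum_sigmaQubit (N : ℕ) (hN : 1 ≤ N) :
    (∑ i : Fin N, sigmaQubit N i).rank = 2 ^ (N + 1) - N - 2 := by
  rw [PBTAux.sum_sigma_eq, Matrix.rank_self_mul_transpose, Matrix.rank_eq_finrank_span_cols]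
  rw [show (PBTAux.P N).col = (PBTAux.P N)ᵀ from rfl]
  have hspan : Submodule.span ℚ (Set.range (PBTAux.P N)ᵀ)
      = LinearMap.ker (PBTAux2.M N).mulVecLin :=
    le_antisymm PBTAux2.span_le_ker PBTAux2.ker_le_span
  rw [show Submodule.span ℚ (Set.range (PBTAux.P N)ᵀ) = PBTAux2.W N from rfl, PBTAux2.W] at *
  rw [hspan]
  have h1 := LinearMap.finrank_range_add_finrank_ker (PBTAux2.M N).mulVecLin
  rw [LinearMap.range_eq_top.mpr PBTAux2.M_surj, finrank_top, Module.finrank_pi,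
    Module.finrank_pi, Fintype.card_fin, Fintype.card_prod, Fintype.card_fun,
    Fintype.card_fin, Fintype.card_fin] at h1
  have h2 : N < 2 ^ N := Nat.lt_two_pow_self
  rw [pow_succ]
  omega
end

section
/- For every integer N ≥ 1, the rational-number identity Σ_{l=0}^{⌈N/2⌉−1} (N+1)·C(N,l)·(N−2l)² / ((N+1−l)(l+1)) = 2^{N+1} − N − 2 holds, where C(N,l) denotes the binomial coefficient. -/
open Finset

lemma aux_sum0 (n : ℕ) : ∑ k ∈ Finset.range (n+1), ((n.choose k : ℚ)) = 2 ^ n := by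
  exact_mod_cast congrArg (Nat.cast (R := ℚ)) (Nat.sum_range_choose n)

lemma aux_sumK (n : ℕ) : ∑ k ∈ Finset.range (n+2), (k:ℚ) * ((n+1).choose k) = (n+1) * 2 ^ n := by
  rw [Finset.sum_range_succ']
  have key : ∀ i : ℕ, ((i:ℚ)+1) * ((n+1).choose (i+1)) = (n+1) * (n.choose i) := by
    intro i
    have := Nat.add_one_mul_choose_eq n i
    have h2 : (((n+1) * n.choose i : ℕ) : ℚ) = (((n+1).choose (i+1) * (i+1) : ℕ) : ℚ) := by
      exact_mod_cast congrArg (Nat.cast (R := ℚ)) this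
    push_cast at h2
    linarith
  simp only [Nat.cast_add, Nat.cast_one]
  calc (∑ i ∈ Finset.range (n+1), ((i:ℚ)+1) * ((n+1).choose (i+1))) + (0:ℚ) * ((n+1).choose 0)
      = ∑ i ∈ Finset.range (n+1), ((n:ℚ)+1) * (n.choose i) := by
        rw [Finset.sum_congr rfl (fun i _ => key i)]; ring
    _ = (n+1) * 2 ^ n := by rw [← Finset.mul_sum, aux_sum0]

lemma aux_sumK2 (n : ℕ) :
    ∑ k ∈ Finset.range (n+3), (k:ℚ)^2 * ((n+2).choose k) = (n+2) * (n+3) * 2 ^ n := by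
  rw [Finset.sum_range_succ']
  have key : ∀ i : ℕ, ((i:ℚ)+1) * ((n+2).choose (i+1)) = (n+2) * ((n+1).choose i) := by
    intro i
    have h := Nat.add_one_mul_choose_eq (n+1) i
    have h2 : (((n+2) * (n+1).choose i : ℕ) : ℚ) = (((n+2).choose (i+1) * (i+1) : ℕ) : ℚ) := by
      exact_mod_cast congrArg (Nat.cast (R := ℚ)) h
    push_cast at h2
    linarith
  simp only [Nat.cast_add, Nat.cast_one]
  calc (∑ i ∈ Finset.range (n+2), ((i:ℚ)+1)^2 * ((n+2).choose (i+1))) + (0:ℚ)^2 * ((n+2).choose 0)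
      = ∑ i ∈ Finset.range (n+2), ((n:ℚ)+2) * (((i:ℚ)+1) * ((n+1).choose i)) := by
        rw [Finset.sum_congr rfl (fun i _ => ?_)]
        · ring
        · have := key i; nlinarith [this]
    _ = ((n:ℚ)+2) * ((∑ i ∈ Finset.range (n+2), (i:ℚ) * ((n+1).choose i))
          + ∑ i ∈ Finset.range (n+2), ((n+1).choose i : ℚ)) := by
        rw [← Finset.sum_add_distrib, ← Finset.mul_sum]
        congr 1; apply Finset.sum_congr rfl; intro i _; ring
    _ = (n+2) * (n+3) * 2 ^ n := by
        rw [aux_sumK n, aux_sum0 (n+1)]; ring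

lemma aux_full (n : ℕ) :
    ∑ k ∈ Finset.range (n+3), ((n+2).choose k : ℚ) * (((n:ℚ)+2) - 2*(k:ℚ))^2
      = ((n:ℚ)+2) * 2 ^ (n+2) := by
  have e : ∀ k ∈ Finset.range (n+3), ((n+2).choose k : ℚ) * (((n:ℚ)+2) - 2*(k:ℚ))^2
      = ((n:ℚ)+2)^2 * (((n+2).choose k : ℚ)) - (4*((n:ℚ)+2)) * ((k:ℚ) * (((n+2).choose k : ℚ)))
        + 4 * ((k:ℚ)^2 * (((n+2).choose k : ℚ))) := by
    intro k _; ring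
  rw [Finset.sum_congr rfl e]
  simp only [Finset.sum_add_distrib, Finset.sum_sub_distrib, ← Finset.mul_sum]
  have h1 := aux_sum0 (n+2)
  have h2 := aux_sumK (n+1)
  have h3 := aux_sumK2 n
  push_cast at h1 h2 h3 ⊢
  rw [show (n:ℚ)+1+1 = (n:ℚ)+2 by ring] at h2
  rw [h1, h2, h3]
  ring

lemma aux_half (N : ℕ) :
    ∑ k ∈ Finset.range ((N+1)/2 + 1), ((N+2).choose k : ℚ) * (((N:ℚ)+2) - 2*(k:ℚ))^2
      = ((N:ℚ)+2) * 2 ^ (N+1) := by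
  set f : ℕ → ℚ := fun k => ((N+2).choose k : ℚ) * (((N:ℚ)+2) - 2*(k:ℚ))^2 with hf
  set h : ℕ := (N+1)/2 with hh
  set M : ℕ := N+2 with hM
  have hle1 : h + 1 ≤ M + 1 := by omega
  have hsplit : (∑ k ∈ Finset.range (h+1), f k) + (∑ k ∈ Finset.Ico (h+1) (M+1), f k)
      = ∑ k ∈ Finset.range (M+1), f k := by
    rw [Finset.range_eq_Ico, Finset.range_eq_Ico]
    exact Finset.sum_Ico_consecutive f (Nat.zero_le _) hle1
  have hsymm : ∀ j : ℕ, j ≤ M → f (M - j) = f j := by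
    intro j hj
    have hc : (M.choose (M - j)) = M.choose j := Nat.choose_symm hj
    have hcast : ((M - j : ℕ) : ℚ) = (M : ℚ) - j := by
      push_cast [Nat.cast_sub hj]; ring
    simp only [hf, hc, hcast]
    push_cast [hM]
    ring
  have hrefl : (∑ k ∈ Finset.Ico (h+1) (M+1), f k) = ∑ j ∈ Finset.range (M - h), f j := by
    have := Finset.sum_Ico_reflect f 0 (n := M) (m := M - h) (by omega)
    rw [show M + 1 - (M - h) = h + 1 by omega, show M + 1 - 0 = M + 1 by omega] at this
    rw [← this]
    rw [Finset.range_eq_Ico]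
    apply Finset.sum_congr rfl
    intro j hj
    rw [Finset.mem_Ico] at hj
    exact hsymm j (by omega)
  have hzero : ∀ j ∈ Finset.Ico (h+1) (M - h), f j = 0 := by
    intro j hj
    rw [Finset.mem_Ico] at hj
    have h2j : 2 * j = M := by omega
    have : ((N:ℚ)+2) - 2*(j:ℚ) = 0 := by
      have : ((2 * j : ℕ) : ℚ) = ((M : ℕ) : ℚ) := by rw [h2j]
      push_cast [hM] at this
      linarith
    simp [hf, this]
  have hB : (∑ k ∈ Finset.Ico (h+1) (M+1), f k) = ∑ k ∈ Finset.range (h+1), f k := by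
    rw [hrefl]
    have hsplit2 : (∑ k ∈ Finset.range (h+1), f k) + (∑ k ∈ Finset.Ico (h+1) (M-h), f k)
        = ∑ k ∈ Finset.range (M - h), f k := by
      rw [Finset.range_eq_Ico, Finset.range_eq_Ico]
      exact Finset.sum_Ico_consecutive f (Nat.zero_le _) (by omega)
    rw [← hsplit2, Finset.sum_eq_zero hzero, add_zero]
  have hfull : ∑ k ∈ Finset.range (M+1), f k = ((N:ℚ)+2) * 2 ^ (N+2) := by
    simpa [hf, hM] using aux_full N
  have : 2 * (∑ k ∈ Finset.range (h+1), f k) = ((N:ℚ)+2) * 2 ^ (N+2) := by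
    rw [← hfull, ← hsplit, hB]; ring
  have := this
  linarith [this, show ((N:ℚ)+2) * 2 ^ (N+2) = 2 * (((N:ℚ)+2) * 2 ^ (N+1)) by ring]

lemma term_eq (N l : ℕ) (hl : l ≤ N) :
    ((N : ℚ) + 1) * (N.choose l) * ((N : ℚ) - 2 * l) ^ 2 /
        (((N : ℚ) + 1 - l) * ((l : ℚ) + 1))
      = ((N+2).choose (l+1) : ℚ) * ((N : ℚ) - 2 * l) ^ 2 / ((N : ℚ) + 2) := by
  have h1n : (N+1) * N.choose l = (N+1).choose (l+1) * (l+1) := Nat.add_one_mul_choose_eq N l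
  have h1 : ((N:ℚ)+1) * (N.choose l) = ((N+1).choose (l+1) : ℚ) * ((l:ℚ)+1) := by
    exact_mod_cast congrArg (Nat.cast (R := ℚ)) h1n
  have h2n : (N+2) * (N+1).choose (l+1) = (N+2).choose (l+1) * (N+1-l) := by
    have a1 := Nat.choose_succ_right_eq (N+2) (l+1)
    have a2 := Nat.add_one_mul_choose_eq (N+1) (l+1)
    have : N + 2 - (l+1) = N + 1 - l := by omega
    rw [this] at a1
    exact a2.trans a1
  have h2 : ((N:ℚ)+2) * ((N+1).choose (l+1) : ℚ) = ((N+2).choose (l+1) : ℚ) * ((N:ℚ)+1-l) := by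
    have := congrArg (Nat.cast (R := ℚ)) h2n
    push_cast [Nat.cast_sub (show l ≤ N+1 by omega)] at this
    linarith
  have d1 : ((N:ℚ)+1-l) ≠ 0 := by
    have : (l:ℚ) ≤ N := by exact_mod_cast hl
    intro hc; linarith
  have d2 : ((l:ℚ)+1) ≠ 0 := by positivity
  have d3 : ((N:ℚ)+2) ≠ 0 := by positivity
  field_simp
  linear_combination ((N:ℚ) - 2*l)^2 * (((N:ℚ)+2) * h1 + ((l:ℚ)+1) * h2)

/-- For every `N ≥ 1`,
`Σ_{l=0}^{⌈N/2⌉−1} (N+1)·C(N,l)·(N−2l)² / ((N+1−l)(l+1)) = 2^{N+1} − N − 2`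
as rational numbers. Here `⌈N/2⌉ = (N+1)/2` (natural division), so the sum
runs over `l ∈ Finset.range ((N+1)/2)`. -/
theorem sum_support_dim_qubit (N : ℕ) (hN : 1 ≤ N) :
    ∑ l ∈ Finset.range ((N + 1) / 2),
        ((N : ℚ) + 1) * (N.choose l) * ((N : ℚ) - 2 * l) ^ 2 /
          (((N : ℚ) + 1 - l) * ((l : ℚ) + 1))
      = 2 ^ (N + 1) - (N : ℚ) - 2 := by
  set h : ℕ := (N+1)/2 with hh
  have step1 : ∑ l ∈ Finset.range h,
      ((N : ℚ) + 1) * (N.choose l) * ((N : ℚ) - 2 * l) ^ 2 /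
        (((N : ℚ) + 1 - l) * ((l : ℚ) + 1))
      = ∑ l ∈ Finset.range h, ((N+2).choose (l+1) : ℚ) * ((N : ℚ) - 2 * l) ^ 2 / ((N : ℚ) + 2) := by
    apply Finset.sum_congr rfl
    intro l hl
    rw [Finset.mem_range] at hl
    exact term_eq N l (by omega)
  have step2 : ∑ k ∈ Finset.range (h + 1), ((N+2).choose k : ℚ) * (((N:ℚ)+2) - 2*(k:ℚ))^2
      = ((N:ℚ)+2) * 2 ^ (N+1) := aux_half N
  rw [Finset.sum_range_succ'] at step2
  have e0 : ((N+2).choose 0 : ℚ) * (((N:ℚ)+2) - 2*((0:ℕ):ℚ))^2 = ((N:ℚ)+2)^2 := by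
    norm_num
  have eshift : ∀ l : ℕ, ((N+2).choose (l+1) : ℚ) * (((N:ℚ)+2) - 2*(((l+1:ℕ)):ℚ))^2
      = ((N+2).choose (l+1) : ℚ) * ((N:ℚ) - 2*(l:ℚ))^2 := by
    intro l; push_cast; ring
  rw [Finset.sum_congr rfl (fun l _ => eshift l), e0] at step2
  have hne : ((N:ℚ)+2) ≠ 0 := by positivity
  rw [step1]
  have : ∑ l ∈ Finset.range h, ((N+2).choose (l+1) : ℚ) * ((N : ℚ) - 2 * l) ^ 2 / ((N : ℚ) + 2)
      = (∑ l ∈ Finset.range h, ((N+2).choose (l+1) : ℚ) * ((N : ℚ) - 2 * l) ^ 2) / ((N:ℚ)+2) := by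
    rw [Finset.sum_div]
  rw [this]
  have hsum : ∑ l ∈ Finset.range h, ((N+2).choose (l+1) : ℚ) * ((N : ℚ) - 2 * l) ^ 2
      = ((N:ℚ)+2) * 2 ^ (N+1) - ((N:ℚ)+2)^2 := by linarith
  rw [hsum]
  field_simp
  ring
end

section
/- For every integer N ≥ 1, the integer identity Σ_{l=0}^{N} (N−2l)²·C(N+2, l+1) = (N+2)·(2^{N+2} − 2N − 4) holds, where C(N+2,l+1) denotes the binomial coefficient. -/
open Finset

lemma sum_k_choose (n : ℕ) :
    ∑ k ∈ Finset.range (n + 2), (k : ℤ) * ((n + 1).choose k : ℤ)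
      = ((n : ℤ) + 1) * 2 ^ n := by
  rw [Finset.sum_range_succ']
  simp only [Nat.cast_zero, zero_mul, add_zero]
  have : ∀ j ∈ Finset.range (n + 1),
      ((j : ℤ) + 1) * ((n + 1).choose (j + 1) : ℤ)
        = ((n : ℤ) + 1) * (n.choose j : ℤ) := by
    intro j _
    have h := Nat.add_one_mul_choose_eq n j
    have h' : ((n + 1) * n.choose j : ℤ) = ((n + 1).choose (j + 1) * (j + 1) : ℤ) := by
      exact_mod_cast congrArg (Nat.cast : ℕ → ℤ) h
    push_cast at h' ⊢
    linarith
  rw [Finset.sum_congr rfl (by intro j hj; push_cast; rw [show ((j:ℤ)+1) * ((n + 1).choose (j + 1) : ℤ) = ((n : ℤ) + 1) * (n.choose j : ℤ) from this j hj])]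
  rw [← Finset.mul_sum]
  congr 1
  rw [← Nat.cast_sum, Nat.sum_range_choose]
  push_cast
  ring

lemma sum_kk_choose (n : ℕ) :
    ∑ k ∈ Finset.range (n + 3), (k : ℤ) * ((k : ℤ) - 1) * ((n + 2).choose k : ℤ)
      = ((n : ℤ) + 2) * ((n : ℤ) + 1) * 2 ^ n := by
  rw [Finset.sum_range_succ']
  simp only [Nat.cast_zero, zero_mul, mul_zero, add_zero]
  rw [Finset.sum_range_succ']
  simp only [Nat.cast_zero, Nat.cast_add, Nat.cast_one, zero_add, sub_self, mul_zero, zero_mul,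
    add_zero]
  have key : ∀ i ∈ Finset.range (n + 1),
      ((i : ℤ) + 1 + 1) * ((i : ℤ) + 1 + 1 - 1) * ((n + 2).choose (i + 1 + 1) : ℤ)
        = ((n : ℤ) + 2) * ((n : ℤ) + 1) * (n.choose i : ℤ) := by
    intro i _
    have h1 := Nat.add_one_mul_choose_eq (n + 1) (i + 1)
    have h2 := Nat.add_one_mul_choose_eq n i
    have h1' : ((n + 2 : ℕ) * (n + 1).choose (i + 1) : ℤ)
        = ((n + 2).choose (i + 2) * (i + 2) : ℤ) := by exact_mod_cast congrArg (Nat.cast : ℕ → ℤ) h1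
    have h2' : ((n + 1 : ℕ) * n.choose i : ℤ)
        = ((n + 1).choose (i + 1) * (i + 1) : ℤ) := by exact_mod_cast congrArg (Nat.cast : ℕ → ℤ) h2
    push_cast at h1' h2' ⊢
    nlinarith [h1', h2']
  rw [Finset.sum_congr rfl key, ← Finset.mul_sum]
  congr 1
  rw [← Nat.cast_sum, Nat.sum_range_choose]
  push_cast
  ring

lemma sum_full (n : ℕ) :
    ∑ k ∈ Finset.range (n + 3), ((n : ℤ) + 2 - 2 * k) ^ 2 * ((n + 2).choose k : ℤ)
      = ((n : ℤ) + 2) * 2 ^ (n + 2) := by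
  have e : ∀ k ∈ Finset.range (n + 3),
      ((n : ℤ) + 2 - 2 * k) ^ 2 * ((n + 2).choose k : ℤ)
        = ((n : ℤ) + 2) ^ 2 * ((n + 2).choose k : ℤ)
          - (4 * (n : ℤ) + 4) * ((k : ℤ) * ((n + 2).choose k : ℤ))
          + 4 * ((k : ℤ) * ((k : ℤ) - 1) * ((n + 2).choose k : ℤ)) := by
    intro k _; ring
  rw [Finset.sum_congr rfl e, Finset.sum_add_distrib, Finset.sum_sub_distrib,
    ← Finset.mul_sum, ← Finset.mul_sum, ← Finset.mul_sum]
  have hS0 : ∑ k ∈ Finset.range (n + 3), ((n + 2).choose k : ℤ) = 2 ^ (n + 2) := by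
    rw [← Nat.cast_sum, Nat.sum_range_choose]; push_cast; ring
  have hS1 := sum_k_choose (n + 1)
  have hS2 := sum_kk_choose n
  push_cast at hS1
  rw [hS0, show n + 3 = (n + 1) + 2 from rfl] at *
  rw [hS1, hS2]
  ring

/-- For every `N ≥ 1`, the integer identity
`Σ_{l=0}^{N} (N−2l)²·C(N+2, l+1) = (N+2)·(2^{N+2} − 2N − 4)`. -/
theorem sum_sq_binom_identity (N : ℕ) (hN : 1 ≤ N) :
    ∑ l ∈ Finset.range (N + 1),
        ((N : ℤ) - 2 * l) ^ 2 * ((N + 2).choose (l + 1) : ℤ)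
      = ((N : ℤ) + 2) * (2 ^ (N + 2) - 2 * N - 4) := by
  have hfull := sum_full N
  rw [Finset.sum_range_succ', Finset.sum_range_succ] at hfull
  simp only [Nat.cast_zero, mul_zero, sub_zero, Nat.choose_zero_right, Nat.cast_one, mul_one,
    Nat.choose_self, Nat.cast_add] at hfull
  have e : ∀ l ∈ Finset.range (N + 1),
      ((N : ℤ) + 2 - 2 * ((l : ℤ) + 1)) ^ 2 * ((N + 2).choose (l + 1) : ℤ)
        = ((N : ℤ) - 2 * l) ^ 2 * ((N + 2).choose (l + 1) : ℤ) := by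
    intro l _; ring_nf
  push_cast at hfull
  rw [Finset.sum_congr rfl e] at hfull
  linarith [hfull]
end

section
/- Let d ≥ 2 and N ≥ 1 be integers, and let M_0, M_1, …, M_N be positive semidefinite matrices on H satisfying Σ_{i=0}^{N} M_i = 1_H and, for every 1 ≤ i ≤ N, tr(M_i · (1_H − d^{N−1} σ_i)) = 0. Then (1/d²)·Σ_{i=1}^{N} tr((M_i + (1/N)·M_0)·σ_i) = (1/d^{N+1})·Σ_{i=1}^{N} tr(M_i) + (1/(N·d²))·tr(M_0 · Σ_{j=1}^{N} σ_j). In other words, every probabilistic port-based teleportation scheme with success probability p_succ = d^{−(N+1)} Σ_{i=1}^N tr(M_i) can be turned into a deterministic one with entanglement fidelity F = p_succ + (1/(d²N))·tr(M_0 ρ), where ρ = Σ_j σ_j. -/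
open Finset Matrix
open scoped ComplexOrder

/-- The `i`-th PBT signal state `σ_i` for `N` ports each of dimension `d`:
a matrix on `(ℂ^d)^{⊗N} ⊗ ℂ^d` indexed by pairs `(a, c)`, whose
`((a,c),(a',c'))` entry is `d^{−N}` iff `a_i = c`, `a'_i = c'`, and
`a_j = a'_j` for all `j ≠ i`, and `0` otherwise. -/
noncomputable def sigmaPBT (d N : ℕ) (i : Fin N) :
    Matrix ((Fin N → Fin d) × Fin d) ((Fin N → Fin d) × Fin d) ℂ :=
  fun p q =>
    if p.1 i = p.2 ∧ q.1 i = q.2 ∧ ∀ j, j ≠ i → p.1 j = q.1 j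
    then ((d : ℂ) ^ N)⁻¹ else 0

/-- Every probabilistic PBT scheme, given by a POVM `M_0, M_1, …, M_N`
(`M_0` the failure outcome) whose success outcomes teleport faithfully
(`tr(M_i (1 − d^{N−1} σ_i)) = 0` for `1 ≤ i ≤ N`), turns into a deterministic
scheme via `Π_i = M_i + M_0/N` whose entanglement fidelity
`F = (1/d²) Σ_i tr(Π_i σ_i)` equals
`p_succ + (1/(d²N))·tr(M_0 ρ)` with `p_succ = d^{−(N+1)} Σ_i tr(M_i)` and
`ρ = Σ_j σ_j`. -/
theorem pPBT_to_dPBT_fidelity (d N : ℕ) (hd : 2 ≤ d) (hN : 1 ≤ N)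
    (M : Fin (N + 1) → Matrix ((Fin N → Fin d) × Fin d) ((Fin N → Fin d) × Fin d) ℂ)
    (hpsd : ∀ i, (M i).PosSemidef)
    (hsum : ∑ i, M i = 1)
    (hfaithful : ∀ i : Fin N,
      (M i.succ * (1 - ((d : ℂ) ^ (N - 1)) • sigmaPBT d N i)).trace = 0) :
    (1 / (d : ℂ) ^ 2) *
        ∑ i : Fin N, ((M i.succ + (1 / (N : ℂ)) • M 0) * sigmaPBT d N i).trace
      = (1 / (d : ℂ) ^ (N + 1)) * ∑ i : Fin N, (M i.succ).trace
          + (1 / ((N : ℂ) * (d : ℂ) ^ 2)) *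
              (M 0 * ∑ j : Fin N, sigmaPBT d N j).trace := by
  obtain ⟨m, rfl⟩ : ∃ m, N = m + 1 := ⟨N - 1, by omega⟩
  simp only [Nat.add_sub_cancel] at hfaithful ⊢
  have hd0 : (d : ℂ) ≠ 0 := by
    simp only [ne_eq, Nat.cast_eq_zero]; omega
  have hN0 : ((m : ℂ) + 1) ≠ 0 := by
    have := Nat.cast_add_one_ne_zero (R := ℂ) m
    simpa using this
  have hpow : ((d : ℂ) ^ m) ≠ 0 := pow_ne_zero _ hd0
  have key : ∀ i : Fin (m + 1), (M i.succ * sigmaPBT d (m + 1) i).trace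
      = ((d : ℂ) ^ m)⁻¹ * (M i.succ).trace := by
    intro i
    have h := hfaithful i
    rw [Matrix.mul_sub, Matrix.mul_one, Matrix.mul_smul, Matrix.trace_sub,
      Matrix.trace_smul, sub_eq_zero, smul_eq_mul] at h
    rw [h, inv_mul_cancel_left₀ hpow]
  have expand : ∀ i : Fin (m + 1),
      ((M i.succ + (1 / ((m : ℂ) + 1)) • M 0) * sigmaPBT d (m + 1) i).trace
      = (M i.succ * sigmaPBT d (m + 1) i).trace
        + (1 / ((m : ℂ) + 1)) * (M 0 * sigmaPBT d (m + 1) i).trace := by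
    intro i
    rw [Matrix.add_mul, Matrix.smul_mul, Matrix.trace_add, Matrix.trace_smul, smul_eq_mul]
  simp only [Nat.cast_add, Nat.cast_one] at *
  simp only [expand, key, Finset.sum_add_distrib, ← Finset.mul_sum]
  rw [Matrix.mul_sum, Matrix.trace_sum]
  field_simp
  ring
end

section
/- Define, for each integer N ≥ 1, S(N) = (2/(N+2))·√(6/((N+1)(N+3)))·Σ_m m·sin(π m/(N+2)), where the sum runs over integers m with 1 ≤ m ≤ N+1 and m ≡ N+1 (mod 2). Then S(N) converges to √6/π as N → ∞. -/
open Finset Filter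

/-- The square-root fidelity between the optimal resource states of
probabilistic and deterministic qubit PBT with `N` ports:
`S(N) = (2/(N+2))·√(6/((N+1)(N+3)))·Σ_m m·sin(π m/(N+2))`,
the sum over integers `1 ≤ m ≤ N+1` with `m ≡ N+1 (mod 2)`. -/
noncomputable def Sfid (N : ℕ) : ℝ :=
  (2 / ((N : ℝ) + 2)) * Real.sqrt (6 / (((N : ℝ) + 1) * ((N : ℝ) + 3))) *
    ∑ m ∈ (Finset.Icc 1 (N + 1)).filter (fun m => m % 2 = (N + 1) % 2),
      (m : ℝ) * Real.sin (Real.pi * m / ((N : ℝ) + 2))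

/-! ### Auxiliary lemmas -/

/-- The real telescoping function `H(m) = (1/(2 sin²θ) - m/2) sin(mθ) - (m cosθ/(2 sinθ)) cos(mθ)`
whose second difference `H(m+2) - H(m)` equals `m sin(mθ)`. -/
noncomputable def Hfn (θ m : ℝ) : ℝ :=
  (1 / (2 * Real.sin θ ^ 2) - m / 2) * Real.sin (m * θ)
    - (m * Real.cos θ / (2 * Real.sin θ)) * Real.cos (m * θ)

lemma Hfn_step (θ : ℝ) (hs : Real.sin θ ≠ 0) (m : ℝ) :
    Hfn θ (m + 2) - Hfn θ m = m * Real.sin (m * θ) := by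
  have key := Real.sin_sq_add_cos_sq θ
  unfold Hfn
  have h1 : (m + 2) * θ = m * θ + 2 * θ := by ring
  rw [h1, Real.sin_add, Real.cos_add, Real.sin_two_mul, Real.cos_two_mul]
  field_simp
  linear_combination (2 * Real.sin (m*θ)
    - 2 * (m+2) * Real.sin θ * Real.cos θ * Real.cos (m*θ)) * key

lemma Hfn_one (θ : ℝ) (hs : Real.sin θ ≠ 0) : Hfn θ 1 = 0 := by
  have key := Real.sin_sq_add_cos_sq θ
  unfold Hfn
  rw [one_mul]
  field_simp
  linear_combination (-1 : ℝ) * key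

lemma Hfn_two (θ : ℝ) (hs : Real.sin θ ≠ 0) : Hfn θ 2 = 0 := by
  have key := Real.sin_sq_add_cos_sq θ
  unfold Hfn
  rw [Real.sin_two_mul, Real.cos_two_mul]
  field_simp
  linear_combination (-2 * Real.cos θ) * key

lemma Hfn_end (θ : ℝ) (n : ℝ) (hs : Real.sin θ ≠ 0) (hn : n * θ = Real.pi) :
    Hfn θ (n + 1) = n / (2 * Real.sin θ) := by
  have key := Real.sin_sq_add_cos_sq θ
  unfold Hfn
  have h1 : (n + 1) * θ = Real.pi + θ := by rw [← hn]; ring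
  rw [h1, Real.sin_add, Real.cos_add, Real.sin_pi, Real.cos_pi]
  field_simp
  ring_nf
  linear_combination (Real.sin θ * (1 + n)) * key

lemma sum_tel (θ : ℝ) (hs : Real.sin θ ≠ 0) (c K : ℕ) :
    ∑ k ∈ Finset.range K, ((c + 2*k : ℕ) : ℝ) * Real.sin (((c + 2*k : ℕ) : ℝ) * θ)
      = Hfn θ ((c + 2*K : ℕ) : ℝ) - Hfn θ (c : ℝ) := by
  have h := Finset.sum_range_sub (f := fun k => Hfn θ ((c + 2*k : ℕ) : ℝ)) K
  simp only [Nat.mul_zero, Nat.add_zero] at h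
  rw [← h]
  apply Finset.sum_congr rfl
  intro k _
  have h2 : ((c + 2*(k+1) : ℕ) : ℝ) = ((c + 2*k : ℕ) : ℝ) + 2 := by push_cast; ring
  rw [h2, Hfn_step θ hs]

/-- Closed form: the parity-restricted sum equals `(N+2)/(2 sin(π/(N+2)))`. -/
lemma sum_closed (N : ℕ) :
    ∑ m ∈ (Finset.Icc 1 (N + 1)).filter (fun m => m % 2 = (N + 1) % 2),
        (m : ℝ) * Real.sin (Real.pi * m / ((N : ℝ) + 2))
      = ((N : ℝ) + 2) / (2 * Real.sin (Real.pi / ((N : ℝ) + 2))) := by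
  set θ : ℝ := Real.pi / ((N : ℝ) + 2) with hθ
  have hn2 : (0:ℝ) < (N : ℝ) + 2 := by positivity
  have hθpos : 0 < θ := by positivity
  have hθlt : θ < Real.pi := by
    rw [hθ, div_lt_iff₀ hn2]
    nlinarith [Real.pi_pos]
  have hs : Real.sin θ ≠ 0 := ne_of_gt (Real.sin_pos_of_pos_of_lt_pi hθpos hθlt)
  set c : ℕ := 1 + N % 2 with hc
  set K : ℕ := (N + 2) / 2 with hK
  have hset : (Finset.Icc 1 (N + 1)).filter (fun m => m % 2 = (N + 1) % 2)
      = (Finset.range K).image (fun k => c + 2*k) := by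
    ext m
    simp only [Finset.mem_filter, Finset.mem_Icc, Finset.mem_image, Finset.mem_range]
    constructor
    · rintro ⟨⟨h1, h2⟩, h3⟩
      exact ⟨(m - c) / 2, by omega, by omega⟩
    · rintro ⟨k, hk, rfl⟩
      omega
  rw [hset, Finset.sum_image (by intro a _ b _ h; simp only at h; omega)]
  have hsummand : ∀ k ∈ Finset.range K,
      ((c + 2*k : ℕ) : ℝ) * Real.sin (Real.pi * ((c + 2*k : ℕ) : ℝ) / ((N:ℝ) + 2))
        = ((c + 2*k : ℕ) : ℝ) * Real.sin (((c + 2*k : ℕ) : ℝ) * θ) := by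
    intro k _
    congr 1
    rw [hθ]
    ring_nf
  rw [Finset.sum_congr rfl hsummand, sum_tel θ hs c K]
  have hck : c + 2*K = N + 3 := by omega
  have hcast : ((c + 2*K : ℕ) : ℝ) = ((N:ℝ) + 2) + 1 := by rw [hck]; push_cast; ring
  have hnθ : ((N:ℝ) + 2) * θ = Real.pi := by
    rw [hθ]; field_simp
  rw [hcast, Hfn_end θ _ hs hnθ]
  have hc0 : Hfn θ (c : ℝ) = 0 := by
    rcases Nat.mod_two_eq_zero_or_one N with h | h
    · have : c = 1 := by omega
      rw [this]; exact_mod_cast Hfn_one θ hs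
    · have : c = 2 := by omega
      rw [this]; exact_mod_cast Hfn_two θ hs
  rw [hc0]; ring

lemma natcast_add_two_atTop : Tendsto (fun N : ℕ => (N:ℝ) + 2) atTop atTop :=
  tendsto_atTop_add_const_right _ 2 tendsto_natCast_atTop_atTop

lemma sin_div_lim : Tendsto (fun x : ℝ => Real.sin x / x) (nhdsWithin 0 {0}ᶜ) (nhds 1) := by
  have h := (Real.hasDerivAt_sin 0)
  rw [hasDerivAt_iff_tendsto_slope] at h
  simp only [Real.cos_zero] at h
  refine h.congr ?_
  intro x
  simp [slope, Real.sin_zero, div_eq_inv_mul]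

lemma hN_lim : Tendsto (fun N : ℕ => Real.pi / ((N:ℝ) + 2)) atTop (nhdsWithin 0 {0}ᶜ) := by
  apply tendsto_nhdsWithin_of_tendsto_nhds_of_eventually_within
  · have h := natcast_add_two_atTop.inv_tendsto_atTop.const_mul Real.pi
    simpa [div_eq_mul_inv] using h
  · filter_upwards with N
    have : (0:ℝ) < Real.pi / ((N:ℝ)+2) := by positivity
    simp [ne_of_gt this]

lemma B_lim : Tendsto (fun N : ℕ => ((N:ℝ) + 2) * Real.sin (Real.pi / ((N:ℝ) + 2)))
    atTop (nhds Real.pi) := by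
  have h := (sin_div_lim.comp hN_lim).const_mul Real.pi
  rw [mul_one] at h
  refine h.congr ?_
  intro N
  have hne : ((N:ℝ)+2) ≠ 0 := by positivity
  have hpi := Real.pi_ne_zero
  rw [Function.comp_apply]
  field_simp

lemma A_lim : Tendsto (fun N : ℕ =>
    Real.sqrt (((N:ℝ)+1) * ((N:ℝ)+3)) / ((N:ℝ)+2)) atTop (nhds 1) := by
  have hu : Tendsto (fun N : ℕ => 1 - (((N:ℝ)+2)⁻¹)^2) atTop (nhds 1) := by
    have h0 := natcast_add_two_atTop.inv_tendsto_atTop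
    have := ((h0.mul h0).const_sub 1)
    simpa [sq] using this
  have hsq : Tendsto (fun N : ℕ => Real.sqrt (1 - (((N:ℝ)+2)⁻¹)^2)) atTop (nhds 1) := by
    have := (Real.continuous_sqrt.tendsto 1).comp hu
    simpa [Function.comp_def] using this
  refine hsq.congr ?_
  intro N
  have hne : (0:ℝ) < (N:ℝ) + 2 := by positivity
  have h1 : 1 - (((N:ℝ)+2)⁻¹)^2 = (((N:ℝ)+1) * ((N:ℝ)+3)) / ((N:ℝ)+2)^2 := by
    field_simp; ring
  rw [h1, Real.sqrt_div (by positivity : (0:ℝ) ≤ ((N:ℝ)+1) * ((N:ℝ)+3)),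
    Real.sqrt_sq (le_of_lt hne)]

/-- `S(N)` converges to `√6/π` as `N → ∞`. -/
theorem Sfid_tendsto : Tendsto Sfid atTop (nhds (Real.sqrt 6 / Real.pi)) := by
  have hg : Tendsto (fun N : ℕ =>
      Real.sqrt (((N:ℝ)+1) * ((N:ℝ)+3)) * Real.sin (Real.pi / ((N:ℝ)+2)))
      atTop (nhds Real.pi) := by
    have h := A_lim.mul B_lim
    rw [one_mul] at h
    refine h.congr ?_
    intro N
    have hne : ((N:ℝ)+2) ≠ 0 := by positivity
    field_simp
  have h := Filter.Tendsto.div (tendsto_const_nhds (x := Real.sqrt 6)) hg Real.pi_ne_zero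
  refine h.congr ?_
  intro N
  have hn2 : (0:ℝ) < (N : ℝ) + 2 := by positivity
  have hθlt : Real.pi / ((N:ℝ)+2) < Real.pi := by
    rw [div_lt_iff₀ hn2]; nlinarith [Real.pi_pos]
  have hθpos : (0:ℝ) < Real.pi / ((N:ℝ)+2) := by positivity
  have hs : (0:ℝ) < Real.sin (Real.pi / ((N:ℝ)+2)) :=
    Real.sin_pos_of_pos_of_lt_pi hθpos hθlt
  have hx : (0:ℝ) < ((N:ℝ)+1) * ((N:ℝ)+3) := by positivity
  unfold Sfid
  rw [Pi.div_apply]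
  rw [sum_closed N]
  rw [Real.sqrt_div (by norm_num : (0:ℝ) ≤ 6)]
  have hsx : (0:ℝ) < Real.sqrt (((N:ℝ)+1) * ((N:ℝ)+3)) := Real.sqrt_pos.mpr hx
  field_simp
end
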